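/- Let S be a recursively enumerable set of nonempty lists of natural numbers and let X ∈ V(S). Then X is computable (ComputablePred (· ∈ X)) if and only if X is both recursively presented (some recursively enumerable Y has C(Y) = X) and recursively discriminable (some recursively enumerable Y is a discriminator for X). -/

import Mathlib

/-- A set `X ⊆ ℕ` satisfies the Horn implications encoded by `S`:
a list `n₀ :: t ∈ S` means `(∀ m ∈ t, m ∈ X) → n₀ ∈ X`. -/
def SatisfiesHorn (S : Set (List ℕ)) (X : Set ℕ) : Prop :=
  ∀ n₀ : ℕ, ∀ t : List ℕ, (n₀ :: t) ∈ S → (∀ m ∈ t, m ∈ X) → n₀ ∈ X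

/-- The quasivariety defined by `S`. -/
def QV (S : Set (List ℕ)) : Set (Set ℕ) := {X | SatisfiesHorn S X}

/-- The closure of `Y`: the smallest element of `QV S` containing `Y`. -/
def QVclosure (S : Set (List ℕ)) (Y : Set ℕ) : Set ℕ :=
  ⋂₀ {X | X ∈ QV S ∧ Y ⊆ X}

/-- `A` is enumeration reducible to `B` via `f`. -/
def EnumRedVia (A B : Set ℕ) (f : ℕ × ℕ → Option (Finset ℕ)) : Prop :=
  Computable f ∧
    ∀ x : ℕ, x ∈ A ↔ ∃ n : ℕ, ∃ F : Finset ℕ, f (x, n) = some F ∧ ↑F ⊆ B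

/-- `A` is enumeration reducible to `B`. -/
def EnumRed (A B : Set ℕ) : Prop := ∃ f : ℕ × ℕ → Option (Finset ℕ), EnumRedVia A B f

/-- `Y` is a discriminator for `X` in `QV S`: `Y` misses `X`, and every strictly
larger point of `QV S` meets `Y`. -/
def Discriminator (S : Set (List ℕ)) (X Y : Set ℕ) : Prop :=
  Y ∩ X = ∅ ∧ ∀ Z ∈ QV S, X ⊂ Z → Z ∩ Y ≠ ∅

namespace QVAux

open Encodable Nat.Partrec.Code
open Nat.Partrec (Code)

/-! ### Basic closure facts -/

theorem QVclosure_mem_QV (S : Set (List ℕ)) (Y : Set ℕ) : QVclosure S Y ∈ QV S := by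
  intro n₀ t hst hprem
  exact Set.mem_sInter.2 fun X hX => hX.1 n₀ t hst fun m hm => Set.mem_sInter.1 (hprem m hm) X hX

theorem subset_QVclosure (S : Set (List ℕ)) (Y : Set ℕ) : Y ⊆ QVclosure S Y :=
  fun _ hy => Set.mem_sInter.2 fun _ hX => hX.2 hy

theorem QVclosure_subset {S : Set (List ℕ)} {X Y : Set ℕ} (hX : X ∈ QV S) (hY : Y ⊆ X) :
    QVclosure S Y ⊆ X :=
  Set.sInter_subset_of_mem ⟨hX, hY⟩

theorem QVclosure_mono {S : Set (List ℕ)} {Y Y' : Set ℕ} (h : Y ⊆ Y') :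
    QVclosure S Y ⊆ QVclosure S Y' :=
  QVclosure_subset (QVclosure_mem_QV S Y') (h.trans (subset_QVclosure S Y'))

theorem QVclosure_eq_self {S : Set (List ℕ)} {X : Set ℕ} (hX : X ∈ QV S) :
    QVclosure S X = X :=
  subset_antisymm (QVclosure_subset hX subset_rfl) (subset_QVclosure S X)

/-- The inductive description of the closure. -/
inductive QVCl (S : Set (List ℕ)) (Y : Set ℕ) : ℕ → Prop
  | base {n} : n ∈ Y → QVCl S Y n
  | step {n₀ t} : (n₀ :: t) ∈ S → (∀ m ∈ t, QVCl S Y m) → QVCl S Y n₀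

theorem QVCl_sound {S : Set (List ℕ)} {X Y : Set ℕ} (hX : X ∈ QV S) (hY : Y ⊆ X) {n : ℕ}
    (h : QVCl S Y n) : n ∈ X := by
  induction h with
  | base h => exact hY h
  | step hst _ ih => exact hX _ _ hst ih

theorem mem_QVclosure_iff {S : Set (List ℕ)} {Y : Set ℕ} {n : ℕ} :
    n ∈ QVclosure S Y ↔ QVCl S Y n := by
  constructor
  · intro h
    exact QVclosure_subset (fun _ _ hst hp => QVCl.step hst hp) (fun _ hy => QVCl.base hy) h
  · intro h
    exact QVCl_sound (QVclosure_mem_QV S Y) (subset_QVclosure S Y) h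

/-! ### Σ₁ representations of r.e. predicates -/

theorem rePred_of_bool {α} [Primcodable α] {f : α → ℕ → Bool} (hf : Primrec₂ f) :
    REPred fun a => ∃ k, f a k = true := by
  have hp : Partrec fun a => Nat.rfind fun n => (Part.some (f a n) : Part Bool) :=
    Partrec.rfind ((hf.to_comp).partrec₂)
  refine hp.dom_re.of_eq fun a => ?_
  refine Iff.trans Nat.rfind_dom ?_
  constructor
  · rintro ⟨n, hn, -⟩
    exact ⟨n, by simpa using hn⟩
  · rintro ⟨n, hn⟩
    exact ⟨n, by simpa using hn, fun _ => trivial⟩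

theorem bool_of_rePred {α} [Primcodable α] {p : α → Prop} (hp : REPred p) :
    ∃ f : α → ℕ → Bool, Primrec₂ f ∧
      (∀ a k k', k ≤ k' → f a k = true → f a k' = true) ∧
      ∀ a, p a ↔ ∃ k, f a k = true := by
  obtain ⟨c, hc⟩ := Nat.Partrec.Code.exists_code.1 hp
  refine ⟨fun a k => (evaln k c (Encodable.encode a)).isSome, ?_, ?_, ?_⟩
  · exact Primrec.option_isSome.comp
      (primrec_evaln.comp (((Primrec.snd).pair (Primrec.const c)).pair
        (Primrec.encode.comp Primrec.fst)))
  · intro a k k' hk h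
    obtain ⟨x, hx⟩ := Option.isSome_iff_exists.1 h
    exact Option.isSome_iff_exists.2 ⟨x, evaln_mono hk hx⟩
  · intro a
    have heq : eval c (Encodable.encode a) =
        Part.map Encodable.encode (Part.assert (p a) fun _ => Part.some ()) := by
      have := congrFun hc (Encodable.encode a)
      simpa [Encodable.encodek, Part.coe_some] using this
    constructor
    · intro ha
      have : (eval c (Encodable.encode a)).Dom := by
        rw [heq]; exact Part.assert_defined ha trivial
      obtain ⟨x, hx⟩ := Part.dom_iff_mem.1 this
      obtain ⟨k, hk⟩ := evaln_complete.1 hx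
      exact ⟨k, Option.isSome_iff_exists.2 ⟨x, hk⟩⟩
    · rintro ⟨k, hk⟩
      obtain ⟨x, hx⟩ := Option.isSome_iff_exists.1 hk
      have : x ∈ eval c (Encodable.encode a) := evaln_complete.2 ⟨k, hx⟩
      rw [heq] at this
      obtain ⟨y, hy, -⟩ := (Part.mem_map_iff _).1 this
      exact (Part.mem_assert_iff.1 hy).1

/-! ### The derivation checker -/

/-- Boolean membership in a list. -/
def bmem (n : ℕ) (L : List ℕ) : Bool := L.foldr (fun m b => (decide (m = n)) || b) false

theorem bmem_iff {n : ℕ} {L : List ℕ} : bmem n L = true ↔ n ∈ L := by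
  induction L with
  | nil => simp [bmem]
  | cons a L ih => simp only [bmem, List.foldr_cons] at ih ⊢
                   simp [ih]
                   tauto

/-- Boolean inclusion of lists. -/
def bsub (t pre : List ℕ) : Bool := t.foldr (fun m b => bmem m pre && b) true

theorem bsub_iff {t pre : List ℕ} : bsub t pre = true ↔ ∀ m ∈ t, m ∈ pre := by
  induction t with
  | nil => simp [bsub]
  | cons a t ih => simp only [bsub, List.foldr_cons] at ih ⊢
                   simp [ih, bmem_iff]

variable (fS : List ℕ → ℕ → Bool) (fY : ℕ → ℕ → ℕ → Bool)

/-- Check whether `e` encodes a list `t` with `n :: t ∈ S` (by stage `s`) and `t ⊆ pre`. -/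
def chk (s : ℕ) (pre : List ℕ) (n e : ℕ) : Bool :=
  ((Encodable.decode e : Option (List ℕ)).map fun t => fS (n :: t) s && bsub t pre).getD false

theorem chk_iff {s : ℕ} {pre : List ℕ} {n e : ℕ} :
    chk fS s pre n e = true ↔
      ∃ t : List ℕ, (Encodable.decode e : Option (List ℕ)) = some t ∧
        fS (n :: t) s = true ∧ ∀ m ∈ t, m ∈ pre := by
  simp [chk, bsub_iff]

/-- `n` is justified at stage `s` given the previously derived elements `pre`. -/
def hjust (x s : ℕ) (pre : List ℕ) (n : ℕ) : Bool :=
  fY x n s || (List.range (s + 1)).foldr (fun e b => chk fS s pre n e || b) false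

theorem foldr_or_iff {g : ℕ → Bool} {L : List ℕ} :
    L.foldr (fun e b => g e || b) false = true ↔ ∃ e ∈ L, g e = true := by
  induction L with
  | nil => simp
  | cons a L ih => simp [ih]

theorem hjust_iff {x s : ℕ} {pre : List ℕ} {n : ℕ} :
    hjust fS fY x s pre n = true ↔
      fY x n s = true ∨ ∃ e ≤ s, chk fS s pre n e = true := by
  simp only [hjust, Bool.or_eq_true, foldr_or_iff, List.mem_range, Nat.lt_succ_iff]

/-- Every element of the list is justified from its predecessors together with `pre`. -/
def hall (x s : ℕ) : List ℕ → List ℕ → Bool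
  | _, [] => true
  | pre, n :: L => hjust fS fY x s pre n && hall x s (pre ++ [n]) L

section Mono

variable {fS fY}

theorem hjust_mono (hfSm : ∀ l k k', k ≤ k' → fS l k = true → fS l k' = true)
    (hfYm : ∀ x y k k', k ≤ k' → fY x y k = true → fY x y k' = true) {x : ℕ} {s s' : ℕ} {pre pre' : List ℕ} {n : ℕ} (hs : s ≤ s')
    (hpre : ∀ m ∈ pre, m ∈ pre') (h : hjust fS fY x s pre n = true) :
    hjust fS fY x s' pre' n = true := by
  rcases (hjust_iff fS fY).1 h with h | ⟨e, he, hc⟩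
  · exact (hjust_iff fS fY).2 (Or.inl (hfYm _ _ _ _ hs h))
  · obtain ⟨t, hdec, hfs, hsub⟩ := (chk_iff fS).1 hc
    exact (hjust_iff fS fY).2 (Or.inr ⟨e, he.trans hs,
      (chk_iff fS).2 ⟨t, hdec, hfSm _ _ _ hs hfs, fun m hm => hpre m (hsub m hm)⟩⟩)

theorem hall_mono (hfSm : ∀ l k k', k ≤ k' → fS l k = true → fS l k' = true)
    (hfYm : ∀ x y k k', k ≤ k' → fY x y k = true → fY x y k' = true) {x : ℕ} {s s' : ℕ} {pre pre' : List ℕ} {L : List ℕ} (hs : s ≤ s')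
    (hpre : ∀ m ∈ pre, m ∈ pre') (h : hall fS fY x s pre L = true) :
    hall fS fY x s' pre' L = true := by
  induction L generalizing pre pre' with
  | nil => rfl
  | cons n L ih =>
    simp only [hall, Bool.and_eq_true] at h ⊢
    refine ⟨hjust_mono hfSm hfYm hs hpre h.1, ih ?_ h.2⟩
    intro m hm
    rcases List.mem_append.1 hm with hm | hm
    · exact List.mem_append.2 (Or.inl (hpre m hm))
    · exact List.mem_append.2 (Or.inr hm)

end Mono

theorem hall_append {x s : ℕ} {pre A B : List ℕ} :
    hall fS fY x s pre (A ++ B) =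
      (hall fS fY x s pre A && hall fS fY x s (pre ++ A) B) := by
  induction A generalizing pre with
  | nil => simp [hall]
  | cons n A ih =>
    simp only [List.cons_append, hall, List.append_eq]
    rw [ih, List.append_assoc, List.singleton_append, Bool.and_assoc]

/-! ### Soundness and completeness of the checker -/

section Spec

variable {fS fY}
variable {S : Set (List ℕ)} {Y : ℕ → Set ℕ}

theorem hall_sound (hSf : ∀ l, l ∈ S ↔ ∃ k, fS l k = true)
    (hYf : ∀ x y, y ∈ Y x ↔ ∃ k, fY x y k = true) {x s : ℕ} {pre L : List ℕ}
    (h : hall fS fY x s pre L = true) (hpre : ∀ m ∈ pre, QVCl S (Y x) m) :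
    ∀ m ∈ L, QVCl S (Y x) m := by
  induction L generalizing pre with
  | nil => intro m hm; cases hm
  | cons n L ih =>
    simp only [hall, Bool.and_eq_true] at h
    have hn : QVCl S (Y x) n := by
      rcases (hjust_iff fS fY).1 h.1 with hy | ⟨e, -, hc⟩
      · exact QVCl.base ((hYf x n).2 ⟨s, hy⟩)
      · obtain ⟨t, -, hfs, hsub⟩ := (chk_iff fS).1 hc
        exact QVCl.step ((hSf (n :: t)).2 ⟨s, hfs⟩) fun m hm => hpre m (hsub m hm)
    intro m hm
    rcases List.mem_cons.1 hm with rfl | hm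
    · exact hn
    · refine ih h.2 ?_ m hm
      intro m' hm'
      rcases List.mem_append.1 hm' with hm' | hm'
      · exact hpre m' hm'
      · rw [List.mem_singleton.1 hm']; exact hn

theorem hall_complete (hfSm : ∀ l k k', k ≤ k' → fS l k = true → fS l k' = true)
    (hfYm : ∀ x y k k', k ≤ k' → fY x y k = true → fY x y k' = true)
    (hSf : ∀ l, l ∈ S ↔ ∃ k, fS l k = true)
    (hYf : ∀ x y, y ∈ Y x ↔ ∃ k, fY x y k = true) {x m : ℕ}
    (h : QVCl S (Y x) m) :
    ∃ s L, hall fS fY x s [] L = true ∧ m ∈ L := by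
  induction h with
  | @base n hn =>
    obtain ⟨k, hk⟩ := (hYf x n).1 hn
    refine ⟨k, [n], ?_, List.mem_singleton_self n⟩
    show (hjust fS fY x k [] n && true) = true
    simp only [Bool.and_true]
    exact (hjust_iff fS fY).2 (Or.inl hk)
  | @step n₀ t hst _ ih =>
    -- first, combine the derivations of the elements of `t`
    have key : ∀ t' : List ℕ, (∀ m ∈ t', ∃ s L, hall fS fY x s [] L = true ∧ m ∈ L) →
        ∃ s L, hall fS fY x s [] L = true ∧ ∀ m ∈ t', m ∈ L := by
      intro t' ht'
      induction t' with
      | nil => exact ⟨0, [], rfl, by simp⟩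
      | cons a t'' ih' =>
        obtain ⟨s1, L1, h1, ha⟩ := ht' a List.mem_cons_self
        obtain ⟨s2, L2, h2, hsub⟩ := ih' fun m hm => ht' m (List.mem_cons_of_mem a hm)
        refine ⟨max s1 s2, L1 ++ L2, ?_, ?_⟩
        · rw [hall_append, Bool.and_eq_true]
          refine ⟨hall_mono hfSm hfYm (le_max_left s1 s2) (fun m hm => hm) h1, ?_⟩
          exact hall_mono hfSm hfYm (le_max_right s1 s2)
            (fun m hm => by simp at hm) h2
        · intro m hm
          rcases List.mem_cons.1 hm with rfl | hm
          · exact List.mem_append.2 (Or.inl ha)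
          · exact List.mem_append.2 (Or.inr (hsub m hm))
    obtain ⟨s, L, hL, hsub⟩ := key t ih
    obtain ⟨k0, hk0⟩ := (hSf (n₀ :: t)).1 hst
    set s' := max s (max k0 (Encodable.encode t)) with hs'
    refine ⟨s', L ++ [n₀], ?_, by simp⟩
    rw [hall_append, Bool.and_eq_true]
    refine ⟨hall_mono hfSm hfYm (le_max_left _ _) (fun m hm => hm) hL, ?_⟩
    show (hjust fS fY x s' ([] ++ L) n₀ && true) = true
    simp only [Bool.and_true, List.nil_append]
    refine (hjust_iff fS fY).2 (Or.inr ⟨Encodable.encode t,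
      le_trans (le_max_right _ _) (le_max_right _ _), ?_⟩)
    refine (chk_iff fS).2 ⟨t, by simp [Encodable.encodek], ?_, hsub⟩
    exact hfSm _ _ _ (le_trans (le_max_left _ _) (le_max_right _ _)) hk0

end Spec

/-! ### The witness predicate -/

/-- Fold step for the primitive recursive implementation of `hall`. -/
def hstep (x s : ℕ) (acc : List ℕ × Bool) (n : ℕ) : List ℕ × Bool :=
  (acc.1 ++ [n], acc.2 && hjust fS fY x s acc.1 n)

/-- `hvalid x s L`: the list `L` is a valid derivation at stage `s`. -/
def hvalid (x s : ℕ) (L : List ℕ) : Bool := (L.foldl (hstep fS fY x s) ([], true)).2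

theorem foldl_hstep {x s : ℕ} (L : List ℕ) :
    ∀ (pre : List ℕ) (b : Bool),
      L.foldl (hstep fS fY x s) (pre, b) = (pre ++ L, b && hall fS fY x s pre L) := by
  induction L with
  | nil => intro pre b; simp [hall]
  | cons n L ih =>
    intro pre b
    simp only [List.foldl_cons, hstep, hall, ih, List.append_assoc, List.singleton_append,
      Bool.and_assoc]

theorem hvalid_eq {x s : ℕ} {L : List ℕ} : hvalid fS fY x s L = hall fS fY x s [] L := by
  simp [hvalid, foldl_hstep]

/-- The Σ₁ witness predicate for membership in the closure. -/
def WB (p : ℕ × ℕ) (k : ℕ) : Bool :=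
  ((Encodable.decode k.unpair.2 : Option (List ℕ)).map fun L =>
    hvalid fS fY p.1 k.unpair.1 L && bmem p.2 L).getD false

theorem WB_iff {S : Set (List ℕ)} {Y : ℕ → Set ℕ}
    (hfSm : ∀ l k k', k ≤ k' → fS l k = true → fS l k' = true)
    (hfYm : ∀ x y k k', k ≤ k' → fY x y k = true → fY x y k' = true)
    (hSf : ∀ l, l ∈ S ↔ ∃ k, fS l k = true)
    (hYf : ∀ x y, y ∈ Y x ↔ ∃ k, fY x y k = true) (x n : ℕ) :
    n ∈ QVclosure S (Y x) ↔ ∃ k, WB fS fY (x, n) k = true := by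
  rw [mem_QVclosure_iff]
  constructor
  · intro h
    obtain ⟨s, L, hL, hn⟩ := hall_complete hfSm hfYm hSf hYf h
    refine ⟨Nat.pair s (Encodable.encode L), ?_⟩
    simp only [WB, Nat.unpair_pair, Encodable.encodek, Option.map_some, Option.getD_some,
      hvalid_eq, Bool.and_eq_true]
    exact ⟨hL, bmem_iff.2 hn⟩
  · rintro ⟨k, hk⟩
    simp only [WB] at hk
    rcases hdec : (Encodable.decode k.unpair.2 : Option (List ℕ)) with - | L
    · rw [hdec] at hk; simp at hk
    · rw [hdec] at hk
      simp only [Option.map_some, Option.getD_some, hvalid_eq, Bool.and_eq_true] at hk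
      exact hall_sound hSf hYf hk.1 (fun m hm => by cases hm) n (bmem_iff.1 hk.2)

/-! ### Primitive recursiveness of the checker -/

section Prim

open Primrec

private theorem or₂ : Primrec₂ (· || ·) := Primrec.dom_bool₂ _
private theorem and₂ : Primrec₂ (· && ·) := Primrec.dom_bool₂ _

theorem bmem_primrec : Primrec₂ bmem := by
  have h : Primrec fun p : (ℕ × List ℕ) × ℕ × Bool => (decide (p.2.1 = p.1.1) || p.2.2) :=
    or₂.comp (Primrec.eq.comp (fst.comp snd) (fst.comp fst)).decide (snd.comp snd)
  exact (list_foldr snd (const false) h.to₂).of_eq fun p => rfl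

theorem bsub_primrec : Primrec₂ bsub := by
  have h : Primrec fun p : (List ℕ × List ℕ) × ℕ × Bool => (bmem p.2.1 p.1.2 && p.2.2) :=
    and₂.comp (bmem_primrec.comp (fst.comp snd) (snd.comp fst)) (snd.comp snd)
  exact (list_foldr fst (const true) h.to₂).of_eq fun p => rfl

variable {fS fY}

theorem chk_primrec (hfS : Primrec₂ fS) :
    Primrec fun q : (ℕ × List ℕ) × ℕ × ℕ => chk fS q.1.1 q.1.2 q.2.1 q.2.2 := by
  have hg : Primrec₂ fun (q : (ℕ × List ℕ) × ℕ × ℕ) (t : List ℕ) =>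
      (fS (q.2.1 :: t) q.1.1 && bsub t q.1.2) :=
    (and₂.comp
      (hfS.comp (list_cons.comp (fst.comp (snd.comp fst)) snd) (fst.comp (fst.comp fst)))
      (bsub_primrec.comp snd (snd.comp (fst.comp fst)))).to₂
  have hmap : Primrec fun q : (ℕ × List ℕ) × ℕ × ℕ =>
      ((Encodable.decode q.2.2 : Option (List ℕ)).map
        fun t => fS (q.2.1 :: t) q.1.1 && bsub t q.1.2) :=
    option_map (Primrec.decode.comp (snd.comp snd)) hg
  exact (option_getD.comp hmap (const false)).of_eq fun q => rfl

theorem hjust_primrec (hfS : Primrec₂ fS)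
    (hfY : Primrec fun q : ℕ × ℕ × ℕ => fY q.1 q.2.1 q.2.2) :
    Primrec fun q : (ℕ × ℕ) × List ℕ × ℕ => hjust fS fY q.1.1 q.1.2 q.2.1 q.2.2 := by
  have part1 : Primrec fun q : (ℕ × ℕ) × List ℕ × ℕ => fY q.1.1 q.2.2 q.1.2 :=
    hfY.comp ((fst.comp fst).pair ((snd.comp snd).pair (snd.comp fst)))
  have hh : Primrec fun p : ((ℕ × ℕ) × List ℕ × ℕ) × ℕ × Bool =>
      (chk fS p.1.1.2 p.1.2.1 p.1.2.2 p.2.1 || p.2.2) :=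
    or₂.comp
      ((chk_primrec hfS).comp
        (((snd.comp (fst.comp fst)).pair (fst.comp (snd.comp fst))).pair
          ((snd.comp (snd.comp fst)).pair (fst.comp snd))))
      (snd.comp snd)
  have part2 : Primrec fun q : (ℕ × ℕ) × List ℕ × ℕ =>
      (List.range (q.1.2 + 1)).foldr (fun e b => chk fS q.1.2 q.2.1 q.2.2 e || b) false :=
    (list_foldr (list_range.comp (succ.comp (snd.comp fst))) (const false) hh.to₂).of_eq
      fun q => rfl
  exact (or₂.comp part1 part2).of_eq fun q => rfl

theorem hvalid_primrec (hfS : Primrec₂ fS)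
    (hfY : Primrec fun q : ℕ × ℕ × ℕ => fY q.1 q.2.1 q.2.2) :
    Primrec fun q : (ℕ × ℕ) × List ℕ => hvalid fS fY q.1.1 q.1.2 q.2 := by
  have hh : Primrec fun p : ((ℕ × ℕ) × List ℕ) × (List ℕ × Bool) × ℕ =>
      hstep fS fY p.1.1.1 p.1.1.2 p.2.1 p.2.2 :=
    ((list_append.comp (fst.comp (fst.comp snd)) (list_cons.comp (snd.comp snd) (const []))).pair
      (and₂.comp (snd.comp (fst.comp snd))
        ((hjust_primrec hfS hfY).comp
          (((fst.comp (fst.comp fst)).pair (snd.comp (fst.comp fst))).pair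
            ((fst.comp (fst.comp snd)).pair (snd.comp snd))))))
  exact (snd.comp (list_foldl snd (const (([], true) : List ℕ × Bool)) hh.to₂)).of_eq
    fun q => rfl

theorem WB_primrec (hfS : Primrec₂ fS)
    (hfY : Primrec fun q : ℕ × ℕ × ℕ => fY q.1 q.2.1 q.2.2) :
    Primrec₂ (WB fS fY) := by
  have hg : Primrec₂ fun (q : (ℕ × ℕ) × ℕ) (L : List ℕ) =>
      (hvalid fS fY q.1.1 (Nat.unpair q.2).1 L && bmem q.1.2 L) :=
    (and₂.comp
      ((hvalid_primrec hfS hfY).comp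
        (((fst.comp (fst.comp fst)).pair
          (fst.comp (Primrec.unpair.comp (snd.comp fst)))).pair snd))
      (bmem_primrec.comp (snd.comp (fst.comp fst)) snd)).to₂
  have hmap : Primrec fun q : (ℕ × ℕ) × ℕ =>
      ((Encodable.decode (Nat.unpair q.2).2 : Option (List ℕ)).map
        fun L => hvalid fS fY q.1.1 (Nat.unpair q.2).1 L && bmem q.1.2 L) :=
    option_map (Primrec.decode.comp (snd.comp (Primrec.unpair.comp snd))) hg
  exact (option_getD.comp hmap (const false)).of_eq fun q => rfl

end Prim

/-- Uniform enumeration of the closure of a parametrized r.e. family. -/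
theorem closure_re {S : Set (List ℕ)} (hS : REPred (· ∈ S)) {fY : ℕ → ℕ → ℕ → Bool}
    (hfY : Primrec fun q : ℕ × ℕ × ℕ => fY q.1 q.2.1 q.2.2)
    (hfYm : ∀ x y k k', k ≤ k' → fY x y k = true → fY x y k' = true)
    {Y : ℕ → Set ℕ} (hYf : ∀ x y, y ∈ Y x ↔ ∃ k, fY x y k = true) :
    ∃ W : ℕ × ℕ → ℕ → Bool, Primrec₂ W ∧
      ∀ x n, n ∈ QVclosure S (Y x) ↔ ∃ k, W (x, n) k = true := by
  obtain ⟨fS, hfS, hfSm, hSf⟩ := bool_of_rePred hS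
  exact ⟨WB fS fY, WB_primrec hfS hfY,
    fun x n => WB_iff (fS := fS) (fY := fY) hfSm hfYm (fun l => hSf l) hYf x n⟩

end QVAux

/-- A point of an r.e. quasivariety is computable iff it is recursively
presented and recursively discriminable. -/
theorem computable_iff_recursively_presented_and_discriminable
    (S : Set (List ℕ)) (hne : ∀ l ∈ S, l ≠ []) (hS : REPred (· ∈ S))
    (X : Set ℕ) (hX : X ∈ QV S) :
    ComputablePred (· ∈ X) ↔
      ((∃ Y : Set ℕ, REPred (· ∈ Y) ∧ QVclosure S Y = X) ∧
       (∃ Y : Set ℕ, REPred (· ∈ Y) ∧ Discriminator S X Y)) := by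
  constructor
  · intro h
    obtain ⟨hre, hcore⟩ := ComputablePred.computable_iff_re_compl_re'.1 h
    refine ⟨⟨X, hre, QVAux.QVclosure_eq_self hX⟩, ⟨Xᶜ, ?_, ?_, ?_⟩⟩
    · exact hcore.of_eq fun a => (Set.mem_compl_iff X a).symm
    · exact Set.compl_inter_self X
    · intro Z hZ hss h0
      obtain ⟨z, hzZ, hzX⟩ := Set.exists_of_ssubset hss
      rw [Set.eq_empty_iff_forall_notMem] at h0
      exact h0 z ⟨hzZ, hzX⟩
  · rintro ⟨⟨Y₁, hY₁, hcl⟩, ⟨Y₂, hY₂, hd₁, hd₂⟩⟩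
    obtain ⟨fB, hfB, hfBm, hBf⟩ := QVAux.bool_of_rePred hY₁
    obtain ⟨f2, hf2, -, h2f⟩ := QVAux.bool_of_rePred hY₂
    -- `X` is r.e. since it is the closure of the r.e. set `Y₁`
    obtain ⟨W1, hW1, hW1iff⟩ := QVAux.closure_re hS (fY := fun _ y k => fB y k)
      (Primrec.comp hfB Primrec.snd) (fun x y k k' hk h => hfBm y k k' hk h)
      (Y := fun _ => Y₁) (fun _ y => hBf y)
    have hre : REPred (· ∈ X) := by
      have hp : Primrec₂ fun (x k : ℕ) => W1 (0, x) k :=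
        (hW1.comp ((Primrec.const 0).pair Primrec.fst) Primrec.snd).to₂
      refine (QVAux.rePred_of_bool hp).of_eq fun x => ?_
      have := hW1iff 0 x
      rw [hcl] at this
      exact this.symm
    -- the complement of `X` is r.e. via the discriminator
    obtain ⟨W2, hW2, hW2iff⟩ := QVAux.closure_re hS
      (fY := fun x y k => fB y k || decide (y = x))
      ((Primrec.dom_bool₂ (· || ·)).comp
        (hfB.comp (Primrec.fst.comp Primrec.snd) (Primrec.snd.comp Primrec.snd))
        (Primrec.eq.comp (Primrec.fst.comp Primrec.snd) Primrec.fst).decide)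
      (fun x y k k' hk h => by
        simp only [Bool.or_eq_true] at h ⊢
        rcases h with h | h
        · exact Or.inl (hfBm y k k' hk h)
        · exact Or.inr h)
      (Y := fun x => Y₁ ∪ {x})
      (fun x y => by
        constructor
        · intro h
          rcases h with h | h
          · obtain ⟨k, hk⟩ := (hBf y).1 h
            exact ⟨k, by simp [hk]⟩
          · exact ⟨0, by simp [Set.mem_singleton_iff.1 h]⟩
        · rintro ⟨k, hk⟩
          simp only [Bool.or_eq_true] at hk
          rcases hk with hk | hk
          · exact Or.inl ((hBf y).2 ⟨k, hk⟩)
          · exact Or.inr (by simpa using hk))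
    have claim : ∀ x : ℕ, ¬ x ∈ X ↔ ∃ y, y ∈ QVclosure S (Y₁ ∪ {x}) ∧ y ∈ Y₂ := by
      intro x
      constructor
      · intro hx
        have hZ := QVAux.QVclosure_mem_QV S (Y₁ ∪ {x})
        have hsub : X ⊆ QVclosure S (Y₁ ∪ {x}) := by
          rw [← hcl]; exact QVAux.QVclosure_mono Set.subset_union_left
        have hxZ : x ∈ QVclosure S (Y₁ ∪ {x}) :=
          QVAux.subset_QVclosure S _ (Set.mem_union_right _ rfl)
        have hss : X ⊂ QVclosure S (Y₁ ∪ {x}) :=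
          (Set.ssubset_iff_of_subset hsub).2 ⟨x, hxZ, hx⟩
        have hne' := hd₂ _ hZ hss
        obtain ⟨y, hy1, hy2⟩ := Set.nonempty_iff_ne_empty.2 hne'
        exact ⟨y, hy1, hy2⟩
      · rintro ⟨y, hyC, hy2⟩ hx
        have hsub : Y₁ ∪ {x} ⊆ X := by
          intro z hz
          rcases hz with hz | hz
          · rw [← hcl]; exact QVAux.subset_QVclosure S Y₁ hz
          · rw [Set.mem_singleton_iff.1 hz]; exact hx
        have hyX : y ∈ X := QVAux.QVclosure_subset hX hsub hyC
        have : y ∈ Y₂ ∩ X := ⟨hy2, hyX⟩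
        rw [hd₁] at this
        exact this
    have hcore : REPred fun x : ℕ => ¬ x ∈ X := by
      have hG : Primrec₂ fun (x k : ℕ) =>
          (W2 (x, (Nat.unpair k).1) (Nat.unpair ((Nat.unpair k).2)).1 &&
            f2 (Nat.unpair k).1 (Nat.unpair ((Nat.unpair k).2)).2) := by
        have hy : Primrec fun p : ℕ × ℕ => (Nat.unpair p.2).1 :=
          Primrec.fst.comp (Primrec.unpair.comp Primrec.snd)
        have hk1 : Primrec fun p : ℕ × ℕ => (Nat.unpair ((Nat.unpair p.2).2)).1 :=
          Primrec.fst.comp (Primrec.unpair.comp (Primrec.snd.comp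
            (Primrec.unpair.comp Primrec.snd)))
        have hk2 : Primrec fun p : ℕ × ℕ => (Nat.unpair ((Nat.unpair p.2).2)).2 :=
          Primrec.snd.comp (Primrec.unpair.comp (Primrec.snd.comp
            (Primrec.unpair.comp Primrec.snd)))
        exact ((Primrec.dom_bool₂ (· && ·)).comp
          (hW2.comp (Primrec.fst.pair hy) hk1) (hf2.comp hy hk2)).to₂
      refine (QVAux.rePred_of_bool hG).of_eq fun x => ?_
      constructor
      · rintro ⟨k, hk⟩
        simp only [Bool.and_eq_true] at hk
        refine (claim x).2 ⟨(Nat.unpair k).1, ?_, ?_⟩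
        · exact (hW2iff x _).2 ⟨_, hk.1⟩
        · exact (h2f _).2 ⟨_, hk.2⟩
      · intro hx
        obtain ⟨y, hyC, hy2⟩ := (claim x).1 hx
        obtain ⟨k1, hk1⟩ := (hW2iff x y).1 hyC
        obtain ⟨k2, hk2⟩ := (h2f y).1 hy2
        refine ⟨Nat.pair y (Nat.pair k1 k2), ?_⟩
        simp only [Nat.unpair_pair, Bool.and_eq_true]
        exact ⟨hk1, hk2⟩
    exact ComputablePred.computable_iff_re_compl_re'.2 ⟨hre, hcore⟩
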